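/- arXiv:1804.08556 — 2 statements merged into one kernel-verified Lean document; each statement's English description precedes it below -/
import Mathlib

section
/- Let d ∈ ℕ with d ≥ 1 and let a : ℕ → ℝ satisfy a(n) ≥ 0 for all n. Suppose that the limits L := lim_{N→∞} (1/|P ∩ [1,N]|)·Σ_{p ∈ P, p ≤ N} a(p) and L_d := lim_{N→∞} (1/|P_d ∩ [1,N]|)·Σ_{p ∈ P_d, p ≤ N} a(p) both exist. Then L_d ≤ φ(d)·L, where φ is Euler's totient function. -/
open Filter MeasureTheory
open scoped Topology ENNReal

/-- Real-valued average of `c` over the elements of `A` lying in `[1,N]`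
(zero if there are none). -/
noncomputable def avgOnR (A : Set ℕ) (N : ℕ) (c : ℕ → ℝ) : ℝ :=
  (∑ p ∈ Finset.Icc 1 N, A.indicator (fun _ => (1 : ℝ)) p)⁻¹ *
    ∑ p ∈ Finset.Icc 1 N, A.indicator c p

/-- `P_d`: the set of primes congruent to `1` modulo `d`. -/
def primesMod1 (d : ℕ) : Set ℕ := {p | Nat.Prime p ∧ (p : ZMod d) = 1}

namespace AvgProgAux

open Filter Topology Complex ArithmeticFunction ArithmeticFunction.vonMangoldt LSeries
open scoped Classical

lemma ts_bound (q : ℕ) [NeZero q] {a : ZMod q} (ha : IsUnit a) :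
    ∃ C : ℝ, ∀ {x : ℝ}, x ∈ Set.Ioc 1 2 →
      |(∑' n : ℕ, residueClass a n / (n : ℝ) ^ x) - (q.totient : ℝ)⁻¹ / (x - 1)| ≤ C := by
  have H {x : ℝ} (hx : 1 < x) :
      ∑' n, residueClass a n / (n : ℝ) ^ x =
        (LFunctionResidueClassAux a x).re + (q.totient : ℝ)⁻¹ / (x - 1) := by
    refine ofReal_injective ?_
    simp only [ofReal_tsum, ofReal_div, ofReal_cpow (Nat.cast_nonneg _), ofReal_natCast,
      ofReal_add, ofReal_inv, ofReal_sub, ofReal_one]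
    simp_rw [← LFunctionResidueClassAux_real ha hx,
      eqOn_LFunctionResidueClassAux ha <| Set.mem_setOf.mpr (ofReal_re x ▸ hx), sub_add_cancel,
      LSeries, LSeries.term]
    refine tsum_congr fun n ↦ ?_
    split_ifs with hn
    · simp only [hn, residueClass_apply_zero, ofReal_zero, zero_div]
    · rfl
  have hcont : ContinuousOn (fun x : ℝ ↦ (LFunctionResidueClassAux a x).re) (Set.Icc 1 2) :=
    continuous_re.continuousOn.comp (t := Set.univ) (continuousOn_LFunctionResidueClassAux a)
      (fun ⦃x⦄ a ↦ trivial) |>.comp continuous_ofReal.continuousOn fun x hx ↦ by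
        simpa only [Set.mem_setOf_eq, ofReal_re] using hx.1
  obtain ⟨C, hC⟩ := isCompact_Icc.exists_bound_of_continuousOn hcont
  refine ⟨C, fun {x} hx ↦ ?_⟩
  rw [H hx.1, add_sub_cancel_right]
  have h := hC x (Set.mem_Icc_of_Ioc hx)
  rwa [Real.norm_eq_abs] at h

/-- the prime-sum weight -/
noncomputable def gS (S : Set ℕ) (x : ℝ) (n : ℕ) : ℝ :=
  if n ∈ S then Real.log n / (n : ℝ) ^ x else 0

lemma gS_nonneg (S : Set ℕ) (hS : ∀ n ∈ S, 2 ≤ n) (x : ℝ) (n : ℕ) : 0 ≤ gS S x n := by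
  unfold gS
  split_ifs with h
  · have h2 : (1:ℝ) ≤ n := by exact_mod_cast (hS n h).trans' (by norm_num)
    have := Real.log_nonneg h2
    positivity
  · exact le_refl 0

lemma summable_residueClass_div_rpow (q : ℕ) [NeZero q] (a : ZMod q) {x : ℝ} (hx : 1 < x) :
    Summable fun n : ℕ ↦ residueClass a n / (n : ℝ) ^ x :=
  summable_real_of_abscissaOfAbsConv_lt <|
    (abscissaOfAbsConv_residueClass_le_one a).trans_lt <| mod_cast hx

lemma residueClass_one_one (n : ℕ) : residueClass (1 : ZMod 1) n = ArithmeticFunction.vonMangoldt n := by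
  simp [residueClass, Set.indicator_apply, Subsingleton.elim ((n : ZMod 1)) 1]

lemma gS_le_residueClass_one (x : ℝ) (n : ℕ) :
    gS {p | Nat.Prime p} x n ≤ residueClass (1 : ZMod 1) n / (n : ℝ) ^ x := by
  rw [residueClass_one_one]
  unfold gS
  split_ifs with h
  · rw [vonMangoldt_apply_prime h]
  · have : (0:ℝ) ≤ ArithmeticFunction.vonMangoldt n := vonMangoldt_nonneg
    positivity

lemma summable_gS_primes {x : ℝ} (hx : 1 < x) : Summable (gS {p | Nat.Prime p} x) := by
  refine Summable.of_nonneg_of_le (gS_nonneg _ (fun n hn ↦ hn.two_le) x)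
    (gS_le_residueClass_one x) ?_
  exact summable_residueClass_div_rpow 1 1 hx

lemma lemmaB : ∃ C : ℝ, ∀ {x : ℝ}, x ∈ Set.Ioc 1 2 →
    (∑' n, gS {p | Nat.Prime p} x n) ≤ 1 / (x - 1) + C := by
  obtain ⟨C, hC⟩ := ts_bound 1 (a := 1) isUnit_one
  refine ⟨C, fun {x} hx ↦ ?_⟩
  have h1 := (abs_le.mp (hC hx)).2
  have h2 : (∑' n, gS {p | Nat.Prime p} x n) ≤ ∑' n, residueClass (1 : ZMod 1) n / (n : ℝ) ^ x :=
    Summable.tsum_le_tsum (gS_le_residueClass_one x) (summable_gS_primes hx.1)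
      (summable_residueClass_div_rpow 1 1 hx.1)
  have ht : (Nat.totient 1 : ℝ)⁻¹ = 1 := by norm_num
  rw [ht] at h1
  linarith [h2, h1]

section C
variable (d : ℕ) [NeZero d]

lemma split_residueClass (x : ℝ) (n : ℕ) :
    residueClass (1 : ZMod d) n / (n : ℝ) ^ x =
      gS (primesMod1 d) x n + (if n.Prime then 0 else residueClass (1 : ZMod d) n) / (n : ℝ) ^ x := by
  unfold gS primesMod1
  by_cases hp : n.Prime
  · simp only [hp, if_true, Set.mem_setOf_eq, true_and, add_zero, zero_div]
    by_cases hm : (n : ZMod d) = 1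
    · simp [residueClass, Set.indicator_apply, hm, vonMangoldt_apply_prime hp]
    · simp [residueClass, Set.indicator_apply, hm]
  · simp [hp]

lemma np_nonneg (x : ℝ) (n : ℕ) :
    0 ≤ (if n.Prime then 0 else residueClass (1 : ZMod d) n) / (n : ℝ) ^ x := by
  have h : 0 ≤ residueClass (1 : ZMod d) n := residueClass_nonneg _ n
  have : (0:ℝ) ≤ (if n.Prime then 0 else residueClass (1 : ZMod d) n) := by positivity
  positivity

lemma primesMod1_two_le : ∀ n ∈ primesMod1 d, 2 ≤ n := fun n hn ↦ hn.1.two_le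

lemma summable_np {x : ℝ} (hx : 1 < x) :
    Summable fun n : ℕ ↦ (if n.Prime then 0 else residueClass (1 : ZMod d) n) / (n : ℝ) ^ x := by
  refine Summable.of_nonneg_of_le (np_nonneg d x) (fun n ↦ ?_)
    (summable_residueClass_div_rpow d 1 hx)
  have h : 0 ≤ residueClass (1 : ZMod d) n := residueClass_nonneg _ n
  have hle : (if n.Prime then 0 else residueClass (1 : ZMod d) n) ≤ residueClass (1 : ZMod d) n := by
    split_ifs <;> simp [h]
  have hd : (0:ℝ) ≤ (n : ℝ) ^ x := Real.rpow_nonneg n.cast_nonneg x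
  rw [div_eq_mul_inv, div_eq_mul_inv]
  exact mul_le_mul_of_nonneg_right hle (inv_nonneg.2 hd)

lemma summable_gS_mod1 {x : ℝ} (hx : 1 < x) : Summable (gS (primesMod1 d) x) := by
  refine Summable.of_nonneg_of_le (gS_nonneg _ (primesMod1_two_le d) x) (fun n ↦ ?_)
    (summable_residueClass_div_rpow d 1 hx)
  calc gS (primesMod1 d) x n ≤ gS (primesMod1 d) x n
        + (if n.Prime then 0 else residueClass (1 : ZMod d) n) / (n : ℝ) ^ x :=
      le_add_of_nonneg_right (np_nonneg d x n)
    _ = _ := (split_residueClass d x n).symm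

lemma np_bounded {x : ℝ} (hx : 1 < x) :
    (∑' n : ℕ, (if n.Prime then 0 else residueClass (1 : ZMod d) n) / (n : ℝ) ^ x) ≤
      ∑' n : ℕ, (if n.Prime then 0 else residueClass (1 : ZMod d) n) / (n : ℝ) := by
  refine Summable.tsum_le_tsum (fun n ↦ ?_) (summable_np d hx) (summable_residueClass_non_primes_div 1)
  rcases Nat.eq_zero_or_pos n with rfl | hn
  · simp
  · have h1 : (1:ℝ) ≤ (n:ℝ) := by exact_mod_cast hn
    have hnum : (0:ℝ) ≤ (if n.Prime then 0 else residueClass (1 : ZMod d) n) := by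
      have := residueClass_nonneg (1 : ZMod d) n; positivity
    have hle : (n : ℝ) ≤ (n : ℝ) ^ x := by
      nth_rewrite 1 [← Real.rpow_one (n:ℝ)]
      exact Real.rpow_le_rpow_of_exponent_le h1 hx.le
    gcongr

lemma lemmaC : ∃ C : ℝ, ∀ {x : ℝ}, x ∈ Set.Ioc 1 2 →
    (d.totient : ℝ)⁻¹ / (x - 1) - C ≤ ∑' n, gS (primesMod1 d) x n := by
  obtain ⟨C, hC⟩ := ts_bound d (a := 1) isUnit_one
  refine ⟨C + ∑' n : ℕ, (if n.Prime then 0 else residueClass (1 : ZMod d) n) / (n : ℝ),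
    fun {x} hx ↦ ?_⟩
  have hsplit : (∑' n : ℕ, residueClass (1 : ZMod d) n / (n : ℝ) ^ x) =
      (∑' n, gS (primesMod1 d) x n) +
        ∑' n : ℕ, (if n.Prime then 0 else residueClass (1 : ZMod d) n) / (n : ℝ) ^ x := by
    rw [← Summable.tsum_add (summable_gS_mod1 d hx.1) (summable_np d hx.1)]
    exact tsum_congr fun n ↦ split_residueClass d x n
  have h1 := (abs_le.mp (hC hx)).1
  have h2 := np_bounded d hx.1
  linarith [hsplit ▸ h1]
end C

noncomputable def fw (x : ℝ) (n : ℕ) : ℝ := Real.log n / (n : ℝ) ^ x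

noncomputable def uS (S : Set ℕ) (n : ℕ) : ℝ := S.indicator (fun _ => (1 : ℝ)) n

lemma uS_nonneg (S : Set ℕ) (n : ℕ) : 0 ≤ uS S n := by
  unfold uS; rw [Set.indicator_apply]; split_ifs <;> norm_num

lemma uS_le_one (S : Set ℕ) (n : ℕ) : uS S n ≤ 1 := by
  unfold uS; rw [Set.indicator_apply]; split_ifs <;> norm_num

lemma fw_nonneg (x : ℝ) (n : ℕ) : 0 ≤ fw x n := by
  unfold fw
  have h : 0 ≤ Real.log n := Real.log_natCast_nonneg n
  positivity

lemma gS_eq_u_mul_f (S : Set ℕ) (x : ℝ) (n : ℕ) : gS S x n = uS S n * fw x n := by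
  unfold gS uS fw; rw [Set.indicator_apply]; split_ifs <;> simp

lemma gS_nonneg' (S : Set ℕ) (x : ℝ) (n : ℕ) : 0 ≤ gS S x n := by
  rw [gS_eq_u_mul_f]; exact mul_nonneg (uS_nonneg S n) (fw_nonneg x n)

lemma abel_sum (u f : ℕ → ℝ) (M : ℕ) :
    ∑ k ∈ Finset.range M, u k * f k =
      (∑ m ∈ Finset.range M, (∑ k ∈ Finset.range (m+1), u k) * (f m - f (m+1)))
        + (∑ k ∈ Finset.range M, u k) * f M := by
  induction M with
  | zero => simp
  | succ M ih =>
    rw [Finset.sum_range_succ (f := fun k => u k * f k),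
        Finset.sum_range_succ (f := fun m => (∑ k ∈ Finset.range (m+1), u k) * (f m - f (m+1))),
        ih, Finset.sum_range_succ u]
    ring

lemma fw_step {x : ℝ} (hx : 1 ≤ x) {n : ℕ} (hn : 3 ≤ n) : fw x (n+1) ≤ fw x n := by
  have ha : (3:ℝ) ≤ (n:ℝ) := by exact_mod_cast hn
  have h0 : (0:ℝ) < (n:ℝ) := by linarith
  have hb : (0:ℝ) < (n:ℝ) + 1 := by linarith
  have he : Real.exp 1 ≤ (n:ℝ) := by
    have := Real.exp_one_lt_d9; linarith
  have hlog : Real.log ((n:ℝ)+1) / ((n:ℝ)+1) ≤ Real.log (n:ℝ) / (n:ℝ) :=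
    Real.log_div_self_antitoneOn (Set.mem_setOf_eq ▸ he)
      (Set.mem_setOf_eq ▸ (by linarith : Real.exp 1 ≤ (n:ℝ)+1)) (by linarith)
  have hpow : ((n:ℝ)+1) ^ (1-x) ≤ (n:ℝ) ^ (1-x) :=
    Real.rpow_le_rpow_of_nonpos h0 (by linarith) (by linarith)
  have key : ∀ b : ℝ, 0 < b → Real.log b / b ^ x = (Real.log b / b) * b ^ (1-x) := by
    intro b hb'
    rw [Real.rpow_sub hb', Real.rpow_one]
    have h1 : b ^ x ≠ 0 := (Real.rpow_pos_of_pos hb' x).ne'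
    field_simp
  have hcast : ((n+1 : ℕ) : ℝ) = (n:ℝ) + 1 := by push_cast; ring
  unfold fw
  rw [hcast, key _ hb, key _ h0]
  have hlogn : 0 ≤ Real.log (n:ℝ) := Real.log_nonneg (by linarith)
  exact mul_le_mul hlog hpow (Real.rpow_nonneg (by linarith) _)
    (div_nonneg hlogn h0.le)

lemma fw_three_le_two {x : ℝ} (hx : 0 ≤ x) : fw x 3 ≤ 2 := by
  unfold fw
  have h1 : (1:ℝ) ≤ (3:ℝ) ^ x := by
    rw [show (1:ℝ) = (3:ℝ) ^ (0:ℝ) by simp]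
    exact Real.rpow_le_rpow_of_exponent_le (by norm_num) hx
  have h2 : Real.log (3:ℕ) ≤ 2 := by
    have := Real.log_le_sub_one_of_pos (by norm_num : (0:ℝ) < (3:ℕ))
    push_cast at this ⊢
    linarith
  calc Real.log (3:ℕ) / (3:ℕ) ^ x ≤ Real.log (3:ℕ) / 1 := by
        apply div_le_div_of_nonneg_left (Real.log_natCast_nonneg 3) one_pos
        push_cast
        exact h1
    _ ≤ 2 := by rw [div_one]; exact h2

lemma fw_two_le_one {x : ℝ} (hx : 0 ≤ x) : fw x 2 ≤ 1 := by
  unfold fw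
  have h1 : (1:ℝ) ≤ (2:ℝ) ^ x := by
    rw [show (1:ℝ) = (2:ℝ) ^ (0:ℝ) by simp]
    exact Real.rpow_le_rpow_of_exponent_le (by norm_num) hx
  have h2 : Real.log (2:ℕ) ≤ 1 := by
    have := Real.log_two_lt_d9
    push_cast
    linarith
  calc Real.log (2:ℕ) / (2:ℕ) ^ x ≤ Real.log (2:ℕ) / 1 := by
        apply div_le_div_of_nonneg_left (Real.log_natCast_nonneg 2) one_pos
        push_cast
        exact h1
    _ ≤ 1 := by rw [div_one]; exact h2

lemma lemmaA (S : Set ℕ) (hS : S ⊆ {p | Nat.Prime p}) (c K₂ : ℝ) (hc : 0 ≤ c) (hK : 0 ≤ K₂)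
    (h : ∀ m : ℕ, (∑ k ∈ Finset.range m, uS S (k+3)) ≤
        c * (∑ k ∈ Finset.range m, uS {p | Nat.Prime p} (k+3)) + K₂)
    {x : ℝ} (hx : 1 ≤ x)
    (hsumS : Summable (gS S x)) (hsumP : Summable (gS {p | Nat.Prime p} x)) :
    (∑' n, gS S x n) ≤ c * (∑' n, gS {p | Nat.Prime p} x n) + (2*K₂ + 1) := by
  have hshift : ∀ m : ℕ, m + 1 + 3 = m + 4 := fun m => by omega
  have hTP_tail_le : ∀ M : ℕ,
      (∑ k ∈ Finset.range M, gS {p | Nat.Prime p} x (k+3)) ≤ ∑' n, gS {p | Nat.Prime p} x n := by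
    intro M
    have h1 : (∑ k ∈ Finset.range M, gS {p | Nat.Prime p} x (k+3)) ≤
        ∑' k, gS {p | Nat.Prime p} x (k+3) :=
      Summable.sum_le_tsum _ (fun i _ => gS_nonneg' _ x _) ((summable_nat_add_iff 3).mpr hsumP)
    have h2 := Summable.sum_add_tsum_nat_add 3 hsumP
    have hhead : 0 ≤ ∑ i ∈ Finset.range 3, gS {p | Nat.Prime p} x i :=
      Finset.sum_nonneg fun i _ => gS_nonneg' _ x i
    linarith
  have key : ∀ M : ℕ, (∑ k ∈ Finset.range M, gS S x (k+3)) ≤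
      c * (∑' n, gS {p | Nat.Prime p} x n) + 2*K₂ := by
    intro M
    have hA := abel_sum (fun k => uS S (k+3)) (fun k => fw x (k+3)) M
    have hAP := abel_sum (fun k => uS {p | Nat.Prime p} (k+3)) (fun k => fw x (k+3)) M
    simp only [hshift] at hA hAP
    have hδ : ∀ m : ℕ, 0 ≤ fw x (m+3) - fw x (m+4) := by
      intro m
      have := fw_step hx (by omega : 3 ≤ m + 3)
      rw [sub_nonneg]
      exact this
    have hfM : 0 ≤ fw x (M+3) := fw_nonneg x _
    calc (∑ k ∈ Finset.range M, gS S x (k+3))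
        = ∑ k ∈ Finset.range M, uS S (k+3) * fw x (k+3) :=
          Finset.sum_congr rfl fun k _ => gS_eq_u_mul_f S x (k+3)
      _ = (∑ m ∈ Finset.range M, (∑ k ∈ Finset.range (m+1), uS S (k+3)) *
            (fw x (m+3) - fw x (m+4)))
            + (∑ k ∈ Finset.range M, uS S (k+3)) * fw x (M+3) := hA
      _ ≤ (∑ m ∈ Finset.range M, (c * (∑ k ∈ Finset.range (m+1), uS {p | Nat.Prime p} (k+3)) + K₂) *
            (fw x (m+3) - fw x (m+4)))
            + (c * (∑ k ∈ Finset.range M, uS {p | Nat.Prime p} (k+3)) + K₂) * fw x (M+3) := by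
          apply add_le_add
          · exact Finset.sum_le_sum fun m _ => mul_le_mul_of_nonneg_right (h (m+1)) (hδ m)
          · exact mul_le_mul_of_nonneg_right (h M) hfM
      _ = c * ((∑ m ∈ Finset.range M, (∑ k ∈ Finset.range (m+1), uS {p | Nat.Prime p} (k+3)) *
            (fw x (m+3) - fw x (m+4)))
            + (∑ k ∈ Finset.range M, uS {p | Nat.Prime p} (k+3)) * fw x (M+3))
            + K₂ * ((∑ m ∈ Finset.range M, (fw x (m+3) - fw x (m+4))) + fw x (M+3)) := by
          rw [Finset.sum_congr rfl (fun m _ => by ring :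
            ∀ m ∈ Finset.range M, (c * (∑ k ∈ Finset.range (m+1), uS {p | Nat.Prime p} (k+3)) + K₂) *
              (fw x (m+3) - fw x (m+4)) =
              c * ((∑ k ∈ Finset.range (m+1), uS {p | Nat.Prime p} (k+3)) * (fw x (m+3) - fw x (m+4)))
                + K₂ * (fw x (m+3) - fw x (m+4))), Finset.sum_add_distrib,
            ← Finset.mul_sum, ← Finset.mul_sum]
          ring
      _ = c * (∑ k ∈ Finset.range M, uS {p | Nat.Prime p} (k+3) * fw x (k+3)) + K₂ * fw x 3 := by
          rw [← hAP]
          congr 1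
          have htel : (∑ m ∈ Finset.range M, (fw x (m+3) - fw x (m+4))) = fw x 3 - fw x (M+3) := by
            have := Finset.sum_range_sub' (fun m => fw x (m+3)) M
            simp only [hshift] at this
            simpa using this
          rw [htel]
          ring
      _ ≤ c * (∑' n, gS {p | Nat.Prime p} x n) + K₂ * 2 := by
          apply add_le_add
          · apply mul_le_mul_of_nonneg_left _ hc
            calc (∑ k ∈ Finset.range M, uS {p | Nat.Prime p} (k+3) * fw x (k+3))
                = ∑ k ∈ Finset.range M, gS {p | Nat.Prime p} x (k+3) :=
                  Finset.sum_congr rfl fun k _ => (gS_eq_u_mul_f _ x (k+3)).symm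
              _ ≤ _ := hTP_tail_le M
          · exact mul_le_mul_of_nonneg_left (fw_three_le_two (by linarith)) hK
      _ = c * (∑' n, gS {p | Nat.Prime p} x n) + 2*K₂ := by ring
  have tail_le : (∑' k, gS S x (k+3)) ≤ c * (∑' n, gS {p | Nat.Prime p} x n) + 2*K₂ :=
    Real.tsum_le_of_sum_range_le (fun k => gS_nonneg' S x (k+3)) key
  have hsplit := Summable.sum_add_tsum_nat_add 3 hsumS
  have hhead : (∑ i ∈ Finset.range 3, gS S x i) ≤ 1 := by
    rw [Finset.sum_range_succ, Finset.sum_range_succ, Finset.sum_range_one]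
    have h0 : gS S x 0 = 0 := by
      unfold gS; rw [if_neg]; intro hmem; exact Nat.not_prime_zero (hS hmem)
    have h1 : gS S x 1 = 0 := by
      unfold gS; rw [if_neg]; intro hmem; exact Nat.not_prime_one (hS hmem)
    have h2 : gS S x 2 ≤ 1 := by
      have hle : gS S x 2 ≤ fw x 2 := by
        unfold gS fw; split_ifs
        · exact le_refl _
        · exact fw_nonneg x 2
      exact hle.trans (fw_two_le_one (by linarith))
    linarith
  linarith

/-! ### Translation between range-sums and interval counts -/

lemma count_translate (S : Set ℕ) (m : ℕ) :
    ∑ k ∈ Finset.range m, uS S (k+3) = ∑ n ∈ Finset.Icc 3 (m+2), uS S n := by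
  rw [← Finset.Ico_add_one_right_eq_Icc, Finset.sum_Ico_eq_sum_range]
  have hm : m + 2 + 1 - 3 = m := by omega
  rw [hm]
  exact Finset.sum_congr rfl fun k _ => by rw [add_comm]

lemma A_le_cnt (S : Set ℕ) (m : ℕ) :
    (∑ k ∈ Finset.range m, uS S (k+3)) ≤ ∑ n ∈ Finset.Icc 1 (m+2), uS S n := by
  rw [count_translate]
  exact Finset.sum_le_sum_of_subset_of_nonneg
    (Finset.Icc_subset_Icc_left (by omega)) (fun n _ _ => uS_nonneg S n)

lemma cnt_le_A_add_two (S : Set ℕ) (m : ℕ) :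
    (∑ n ∈ Finset.Icc 1 (m+2), uS S n) ≤ (∑ k ∈ Finset.range m, uS S (k+3)) + 2 := by
  rw [count_translate]
  have hsub : Finset.Icc 3 (m+2) ⊆ Finset.Icc 1 (m+2) := Finset.Icc_subset_Icc_left (by omega)
  have hsdiff := Finset.sum_sdiff (f := uS S) hsub
  have hbound : (∑ n ∈ Finset.Icc 1 (m+2) \ Finset.Icc 3 (m+2), uS S n) ≤ 2 := by
    have hsub2 : Finset.Icc 1 (m+2) \ Finset.Icc 3 (m+2) ⊆ ({1, 2} : Finset ℕ) := by
      intro n hn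
      simp only [Finset.mem_sdiff, Finset.mem_Icc, Finset.mem_insert, Finset.mem_singleton] at hn ⊢
      omega
    calc (∑ n ∈ Finset.Icc 1 (m+2) \ Finset.Icc 3 (m+2), uS S n)
        ≤ ∑ n ∈ ({1, 2} : Finset ℕ), uS S n :=
          Finset.sum_le_sum_of_subset_of_nonneg hsub2 (fun n _ _ => uS_nonneg S n)
      _ = uS S 1 + uS S 2 := by
          rw [Finset.sum_insert (by norm_num), Finset.sum_singleton]
      _ ≤ 2 := by
          have := uS_le_one S 1; have := uS_le_one S 2; linarith
  linarith

/-- The main analytic input: if the count of primes `≡ 1 (mod d)` up to `N` is bounded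
by `c` times the count of all primes up to `N` plus a constant, then `c ≥ φ(d)⁻¹`. -/
lemma main_analytic (d : ℕ) [NeZero d] (c K : ℝ) (hc : 0 ≤ c) (hK : 0 ≤ K)
    (hcnt : ∀ N : ℕ, (∑ p ∈ Finset.Icc 1 N, uS (primesMod1 d) p) ≤
        c * (∑ p ∈ Finset.Icc 1 N, uS {p | Nat.Prime p} p) + K) :
    (d.totient : ℝ)⁻¹ ≤ c := by
  by_contra hlt
  push_neg at hlt
  obtain ⟨C₂, hB⟩ := lemmaB
  obtain ⟨C₁, hC⟩ := lemmaC d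
  set K₂ : ℝ := 2*c + K with hK₂def
  have hK₂ : 0 ≤ K₂ := by positivity
  have hcnt' : ∀ m : ℕ, (∑ k ∈ Finset.range m, uS (primesMod1 d) (k+3)) ≤
      c * (∑ k ∈ Finset.range m, uS {p | Nat.Prime p} (k+3)) + K₂ := by
    intro m
    calc (∑ k ∈ Finset.range m, uS (primesMod1 d) (k+3))
        ≤ ∑ n ∈ Finset.Icc 1 (m+2), uS (primesMod1 d) n := A_le_cnt _ m
      _ ≤ c * (∑ n ∈ Finset.Icc 1 (m+2), uS {p | Nat.Prime p} n) + K := hcnt (m+2)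
      _ ≤ c * ((∑ k ∈ Finset.range m, uS {p | Nat.Prime p} (k+3)) + 2) + K :=
          add_le_add_left (mul_le_mul_of_nonneg_left (cnt_le_A_add_two _ m) hc) K
      _ = c * (∑ k ∈ Finset.range m, uS {p | Nat.Prime p} (k+3)) + K₂ := by
          rw [hK₂def]; ring
  have hfinal : ∀ x ∈ Set.Ioc (1:ℝ) 2,
      ((d.totient : ℝ)⁻¹ - c) / (x-1) ≤ C₁ + c*C₂ + (2*K₂+1) := by
    intro x hx
    have h1 := hC hx
    have h2 := hB hx
    have h3 := lemmaA (primesMod1 d) (fun n hn => hn.1) c K₂ hc hK₂ hcnt' hx.1.le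
      (summable_gS_mod1 d hx.1) (summable_gS_primes hx.1)
    have h4 : c * (∑' n, gS {p | Nat.Prime p} x n) ≤ c * (1/(x-1) + C₂) :=
      mul_le_mul_of_nonneg_left h2 hc
    have h5 : c * (1/(x-1) + C₂) = c/(x-1) + c*C₂ := by ring
    have h6 : ((d.totient : ℝ)⁻¹ - c) / (x-1) =
        (d.totient : ℝ)⁻¹/(x-1) - c/(x-1) := by ring
    linarith
  set ε : ℝ := (d.totient : ℝ)⁻¹ - c with hεdef
  have hε : 0 < ε := by simp only [hεdef]; linarith
  set D : ℝ := C₁ + c*C₂ + (2*K₂+1) with hDdef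
  set t : ℝ := min 1 (ε/(2*(|D|+1))) with htdef
  have habs : 0 < |D| + 1 := by positivity
  have ht0 : 0 < t := lt_min one_pos (div_pos hε (by positivity))
  have ht1 : t ≤ 1 := min_le_left _ _
  have hx : (1 + t) ∈ Set.Ioc (1:ℝ) 2 := ⟨by linarith, by linarith⟩
  have hfin := hfinal (1+t) hx
  have hsimp : 1 + t - 1 = t := by ring
  rw [hsimp] at hfin
  have ht2 : t ≤ ε/(2*(|D|+1)) := min_le_right _ _
  have hge : 2*(|D|+1) ≤ ε/t := by
    rw [le_div_iff₀ ht0]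
    calc 2*(|D|+1) * t ≤ 2*(|D|+1) * (ε/(2*(|D|+1))) := by
          apply mul_le_mul_of_nonneg_left ht2 (by positivity)
      _ = ε := by field_simp
  have : D < 2*(|D|+1) := by
    have := le_abs_self D
    linarith
  linarith

lemma cnt_nonneg (S : Set ℕ) (N : ℕ) : 0 ≤ ∑ p ∈ Finset.Icc 1 N, uS S p :=
  Finset.sum_nonneg fun p _ => uS_nonneg S p

lemma cnt_mono (S : Set ℕ) {N M : ℕ} (h : N ≤ M) :
    (∑ p ∈ Finset.Icc 1 N, uS S p) ≤ ∑ p ∈ Finset.Icc 1 M, uS S p :=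
  Finset.sum_le_sum_of_subset_of_nonneg (Finset.Icc_subset_Icc_right h)
    (fun p _ _ => uS_nonneg S p)

lemma one_le_cnt (S : Set ℕ) {p N : ℕ} (hp : p ∈ S) (h1 : 1 ≤ p) (hN : p ≤ N) :
    1 ≤ ∑ q ∈ Finset.Icc 1 N, uS S q := by
  have hmem : p ∈ Finset.Icc 1 N := Finset.mem_Icc.mpr ⟨h1, hN⟩
  have := Finset.single_le_sum (f := uS S) (fun q _ => uS_nonneg S q) hmem
  have hup : uS S p = 1 := by unfold uS; rw [Set.indicator_of_mem hp]
  linarith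

end AvgProgAux

open AvgProgAux in
/-- Lemma 4.4: for a nonnegative sequence, the average over primes `p ≡ 1 (mod d)` is at most
`φ(d)` times the average over all primes. -/
theorem avg_over_progression_primes_le_totient_mul_avg
    (d : ℕ) (hd : 1 ≤ d) (a : ℕ → ℝ) (ha : ∀ n, 0 ≤ a n) (L Ld : ℝ)
    (hL : Tendsto (fun N => avgOnR {p | Nat.Prime p} N a) atTop (nhds L))
    (hLd : Tendsto (fun N => avgOnR (primesMod1 d) N a) atTop (nhds Ld)) :
    Ld ≤ (Nat.totient d : ℝ) * L := by
  have : NeZero d := ⟨by omega⟩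
  set φR : ℝ := (Nat.totient d : ℝ) with hφdef
  have hφpos : 0 < φR := by
    have := Nat.totient_pos.mpr (by omega : 0 < d)
    simp only [hφdef]
    exact_mod_cast this
  have hφ1 : 1 ≤ φR := by
    have h := Nat.totient_pos.mpr (by omega : 0 < d)
    simp only [hφdef]
    exact_mod_cast h
  -- nonnegativity of the averages
  have havg : ∀ (A : Set ℕ) (N : ℕ), 0 ≤ avgOnR A N a := by
    intro A N
    apply mul_nonneg
    · apply inv_nonneg.2
      exact Finset.sum_nonneg fun p _ =>
        Set.indicator_apply_nonneg fun _ => zero_le_one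
    · exact Finset.sum_nonneg fun p _ => Set.indicator_apply_nonneg fun _ => ha p
  have hL0 : 0 ≤ L := ge_of_tendsto' hL fun N => havg _ N
  by_contra hcon
  push_neg at hcon
  have hLd0 : 0 < Ld := lt_of_le_of_lt (mul_nonneg hφpos.le hL0) hcon
  set δ : ℝ := (Ld - φR*L)/(2*(φR+1)) with hδdef
  have hδ : 0 < δ := div_pos (by linarith) (by positivity)
  have hδLd : δ ≤ Ld/4 := by
    rw [hδdef]
    apply div_le_div₀ (by linarith) (by nlinarith) (by norm_num) (by linarith)
  set c : ℝ := (L+δ)/(Ld-δ) with hcdef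
  have hden : 0 < Ld - δ := by linarith
  have hc0 : 0 ≤ c := div_nonneg (by linarith) hden.le
  have hmul : δ*(2*(φR+1)) = Ld - φR*L := by
    rw [hδdef]; field_simp
  have hkey : φR*(L+δ) < Ld - δ := by nlinarith [mul_pos hφpos hδ]
  have hcφ : c < φR⁻¹ := by
    rw [hcdef, div_lt_iff₀ hden, inv_mul_eq_div, lt_div_iff₀ hφpos]
    nlinarith
  -- eventual bounds
  have hev1 : ∀ᶠ N in atTop, avgOnR {p | Nat.Prime p} N a < L + δ :=
    hL.eventually_lt_const (by linarith)
  have hev2 : ∀ᶠ N in atTop, Ld - δ < avgOnR (primesMod1 d) N a :=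
    hLd.eventually_const_lt (by linarith)
  obtain ⟨p₀, hp₀gt, hp₀p, hp₀m⟩ := Nat.forall_exists_prime_gt_and_eq_mod
    (q := d) (a := 1) isUnit_one 0
  have hev3 : ∀ᶠ N in atTop, 1 ≤ ∑ q ∈ Finset.Icc 1 N, uS (primesMod1 d) q := by
    filter_upwards [eventually_ge_atTop p₀] with N hN
    exact one_le_cnt _ ⟨hp₀p, hp₀m⟩ hp₀p.one_lt.le hN
  have hev4 : ∀ᶠ N in atTop, 1 ≤ ∑ q ∈ Finset.Icc 1 N, uS {p | Nat.Prime p} q := by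
    filter_upwards [eventually_ge_atTop 2] with N hN
    exact one_le_cnt _ (by simp [Set.mem_setOf_eq, Nat.prime_two]) one_le_two hN
  obtain ⟨N₁, hN₁⟩ := eventually_atTop.mp (hev1.and (hev2.and (hev3.and hev4)))
  -- the count comparison
  have hcomp : ∀ N, N₁ ≤ N →
      (∑ q ∈ Finset.Icc 1 N, uS (primesMod1 d) q) ≤
        c * ∑ q ∈ Finset.Icc 1 N, uS {p | Nat.Prime p} q := by
    intro N hN
    obtain ⟨h1, h2, h3, h4⟩ := hN₁ N hN
    set Cd := ∑ q ∈ Finset.Icc 1 N, uS (primesMod1 d) q with hCd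
    set CP := ∑ q ∈ Finset.Icc 1 N, uS {p | Nat.Prime p} q with hCP
    have hCd0 : 0 < Cd := lt_of_lt_of_le one_pos h3
    have hCP0 : 0 < CP := lt_of_lt_of_le one_pos h4
    -- sums of `a`-indicators
    set Sd := ∑ q ∈ Finset.Icc 1 N, (primesMod1 d).indicator a q with hSd
    set SP := ∑ q ∈ Finset.Icc 1 N, ({p | Nat.Prime p} : Set ℕ).indicator a q with hSP
    have hSdSP : Sd ≤ SP := by
      apply Finset.sum_le_sum
      intro q _
      exact Set.indicator_le_indicator_of_subset (fun n hn => hn.1) ha q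
    have havgd : avgOnR (primesMod1 d) N a = Cd⁻¹ * Sd := rfl
    have havgP : avgOnR {p | Nat.Prime p} N a = CP⁻¹ * SP := rfl
    have hlow : (Ld - δ) * Cd ≤ Sd := by
      have := h2.le
      rw [havgd] at this
      calc (Ld - δ) * Cd ≤ (Cd⁻¹ * Sd) * Cd := mul_le_mul_of_nonneg_right this hCd0.le
        _ = Sd := by field_simp
    have hhigh : SP ≤ (L + δ) * CP := by
      have := h1.le
      rw [havgP] at this
      calc SP = (CP⁻¹ * SP) * CP := by field_simp
        _ ≤ (L + δ) * CP := mul_le_mul_of_nonneg_right this hCP0.le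
    have hchain : (Ld - δ) * Cd ≤ (L + δ) * CP := le_trans hlow (le_trans hSdSP hhigh)
    rw [hcdef]
    rw [div_mul_eq_mul_div, le_div_iff₀ hden]
    nlinarith
  -- global bound with constant
  set K : ℝ := ∑ q ∈ Finset.Icc 1 N₁, uS (primesMod1 d) q with hKdef
  have hK0 : 0 ≤ K := cnt_nonneg _ N₁
  have hcnt : ∀ N : ℕ, (∑ p ∈ Finset.Icc 1 N, uS (primesMod1 d) p) ≤
      c * (∑ p ∈ Finset.Icc 1 N, uS {p | Nat.Prime p} p) + K := by
    intro N
    rcases le_or_gt N₁ N with h | h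
    · have := hcomp N h
      linarith
    · have h1 : (∑ p ∈ Finset.Icc 1 N, uS (primesMod1 d) p) ≤ K :=
        hKdef ▸ cnt_mono _ h.le
      have h2 : 0 ≤ c * ∑ p ∈ Finset.Icc 1 N, uS {p | Nat.Prime p} p :=
        mul_nonneg hc0 (cnt_nonneg _ N)
      linarith
  have := main_analytic d c K hc0 hK0 hcnt
  rw [← hφdef] at this
  exact absurd (lt_of_le_of_lt this hcφ) (lt_irrefl _)
end

section
/- Let t ∈ ℝ with t ≠ 0, let m ∈ ℕ, let h_1, …, h_m be nonnegative integers, and let k_1, …, k_m ∈ ℤ. Then lim_{N→∞} (1/log N)·Σ_{n=1}^N (1/n)·∏_{j=1}^m exp(i·t·k_j·log(n+h_j)) equals 1 if k_1 + ⋯ + k_m = 0, and equals 0 otherwise. In particular, lim_{N→∞} (1/log N)·Σ_{n=1}^N n^{it}/n = 0 for every nonzero real t. -/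
open Filter MeasureTheory
open scoped Topology ENNReal

/-- Logarithmic average of `b` up to `N`: `(1/log N) * ∑_{n=1}^N b(n)/n`. -/
noncomputable def logAvg (N : ℕ) (b : ℕ → ℂ) : ℂ :=
  (Real.log N : ℂ)⁻¹ * ∑ n ∈ Finset.Icc 1 N, (n : ℂ)⁻¹ * b n

open Finset intervalIntegral


noncomputable def H (N : ℕ) : ℝ := ∑ n ∈ Finset.Icc 1 N, (n : ℝ)⁻¹

lemma H_eq_range (N : ℕ) : H N = ∑ n ∈ Finset.range (N+1), (n : ℝ)⁻¹ := by
  rw [H, Finset.range_eq_Ico, ← Finset.Ico_add_one_right_eq_Icc]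
  rw [Finset.sum_eq_sum_Ico_succ_bot (Nat.succ_pos N)]
  simp

lemma tendsto_H_atTop : Tendsto H atTop atTop := by
  have h1 : Tendsto (fun n : ℕ => ∑ i ∈ range n, (i : ℝ)⁻¹) atTop atTop := by
    rw [← not_summable_iff_tendsto_nat_atTop_of_nonneg (fun n => by positivity)]
    exact Real.not_summable_natCast_inv
  have := h1.comp (tendsto_add_atTop_nat 1)
  refine this.congr fun N => ?_
  simp [H_eq_range, Function.comp]

lemma H_eq_harmonic (N : ℕ) : H N = (harmonic N : ℝ) := by
  rw [harmonic_eq_sum_Icc, H]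
  push_cast
  rfl

lemma tendsto_H_div_log : Tendsto (fun N : ℕ => H N / Real.log N) atTop (𝓝 1) := by
  have h1 : Tendsto (fun n : ℕ => (harmonic n : ℝ) - Real.log n) atTop
      (𝓝 Real.eulerMascheroniConstant) := Real.tendsto_harmonic_sub_log
  have h2 : Tendsto (fun n : ℕ => (Real.log n)⁻¹) atTop (𝓝 0) :=
    (Real.tendsto_log_atTop.comp tendsto_natCast_atTop_atTop).inv_tendsto_atTop
  have h3 : Tendsto (fun n : ℕ => 1 + ((harmonic n : ℝ) - Real.log n) * (Real.log n)⁻¹)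
      atTop (𝓝 (1 + Real.eulerMascheroniConstant * 0)) :=
    tendsto_const_nhds.add (h1.mul h2)
  rw [mul_zero, add_zero] at h3
  refine h3.congr' ?_
  filter_upwards [eventually_ge_atTop 2] with N hN
  have hlog : Real.log N ≠ 0 := by
    have : (1:ℝ) < N := by exact_mod_cast Nat.lt_of_lt_of_le one_lt_two hN
    exact (Real.log_pos this).ne'
  rw [H_eq_harmonic]
  field_simp
  ring

lemma H_pos (N : ℕ) (hN : 1 ≤ N) : 0 < H N := by
  refine Finset.sum_pos (fun i hi => ?_) ⟨1, by simp [hN]⟩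
  simp only [Finset.mem_Icc] at hi
  have : (0:ℝ) < i := by exact_mod_cast hi.1
  positivity

lemma tendsto_logAvg_of_tendsto {b : ℕ → ℂ} {L : ℂ} (hb : Tendsto b atTop (𝓝 L)) :
    Tendsto (fun N => logAvg N b) atTop (𝓝 L) := by
  set e : ℕ → ℂ := fun n => (n:ℂ)⁻¹ * (b n - L) with he
  have hbL : Tendsto (fun n => ‖b n - L‖) atTop (𝓝 0) := by
    rw [← tendsto_zero_iff_norm_tendsto_zero]
    exact tendsto_sub_nhds_zero_iff.2 hb
  have hlittle : e =o[atTop] (fun n : ℕ => (n:ℝ)⁻¹) := by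
    rw [Asymptotics.isLittleO_iff]
    intro c hc
    filter_upwards [hbL.eventually_le_const hc] with n hn
    have hnorm : ‖e n‖ = (n:ℝ)⁻¹ * ‖b n - L‖ := by
      simp [he, norm_mul]
    rw [hnorm, Real.norm_eq_abs, abs_inv, Nat.abs_cast]
    calc (n:ℝ)⁻¹ * ‖b n - L‖ ≤ (n:ℝ)⁻¹ * c :=
          mul_le_mul_of_nonneg_left hn (by positivity)
      _ = c * (n:ℝ)⁻¹ := mul_comm _ _
  have h1 : Tendsto (fun n : ℕ => ∑ i ∈ range n, (i : ℝ)⁻¹) atTop atTop := by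
    rw [← not_summable_iff_tendsto_nat_atTop_of_nonneg (fun n => by positivity)]
    exact Real.not_summable_natCast_inv
  have hsum := hlittle.sum_range (fun i => by positivity) h1
  have hsum2 : (fun N => ∑ n ∈ Finset.Icc 1 N, e n) =o[atTop] H := by
    have := hsum.comp_tendsto (tendsto_add_atTop_nat 1)
    refine this.congr (fun N => ?_) (fun N => ?_)
    · show ∑ i ∈ range (N+1), e i = _
      rw [Finset.range_eq_Ico, ← Finset.Ico_add_one_right_eq_Icc,
        Finset.sum_eq_sum_Ico_succ_bot (Nat.succ_pos N)]
      simp [he]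
    · exact (H_eq_range N).symm
  have hnormo : Tendsto (fun N => ‖∑ n ∈ Finset.Icc 1 N, e n‖ / H N) atTop (𝓝 0) := by
    refine (Asymptotics.isLittleO_iff_tendsto fun N hN => ?_).1 hsum2.norm_left
    cases N with
    | zero => simp
    | succ n => exact absurd hN (H_pos _ n.succ_pos).ne'
  have key : ∀ N : ℕ, logAvg N b
      = (Real.log N : ℂ)⁻¹ * ∑ n ∈ Finset.Icc 1 N, e n + ((H N / Real.log N : ℝ) : ℂ) * L := by
    intro N
    rw [logAvg]
    have : ∑ n ∈ Finset.Icc 1 N, (n : ℂ)⁻¹ * b n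
        = (∑ n ∈ Finset.Icc 1 N, e n) + ((H N : ℝ) : ℂ) * L := by
      rw [H, he]
      push_cast
      rw [Finset.sum_mul, ← Finset.sum_add_distrib]
      congr 1; ext n; ring
    rw [this, mul_add, div_eq_mul_inv]
    push_cast
    ring
  have lim1 : Tendsto (fun N : ℕ => (Real.log N : ℂ)⁻¹ * ∑ n ∈ Finset.Icc 1 N, e n)
      atTop (𝓝 0) := by
    apply squeeze_zero_norm'
      (a := fun N => (‖∑ n ∈ Finset.Icc 1 N, e n‖ / H N) * (H N / Real.log N))
    · filter_upwards [eventually_ge_atTop 2] with N hN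
      have hHpos : 0 < H N := H_pos N (le_trans one_le_two hN)
      have hlogpos : 0 < Real.log N := Real.log_pos (by exact_mod_cast hN)
      rw [norm_mul, norm_inv, Complex.norm_real, Real.norm_eq_abs,
        abs_of_pos hlogpos]
      rw [div_mul_div_comm, mul_comm (H N) (Real.log (N:ℝ)), ← div_mul_div_comm,
        div_self hHpos.ne', mul_one, div_eq_mul_inv, mul_comm]
    · simpa using hnormo.mul tendsto_H_div_log
  have lim2 : Tendsto (fun N : ℕ => ((H N / Real.log N : ℝ) : ℂ) * L) atTop (𝓝 (1 * L)) := by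
    refine Tendsto.mul ?_ tendsto_const_nhds
    have h := (Complex.continuous_ofReal.tendsto 1).comp tendsto_H_div_log
    rw [Complex.ofReal_one] at h
    exact h
  have := lim1.add lim2
  rw [zero_add, one_mul] at this
  exact this.congr fun N => (key N).symm


lemma rpow_neg_two_anti {a b : ℝ} (ha : 0 < a) (hab : a ≤ b) :
    b ^ (-2:ℝ) ≤ a ^ (-2:ℝ) := by
  rw [Real.rpow_neg ha.le, Real.rpow_neg (ha.trans_le hab).le]
  exact inv_anti₀ (Real.rpow_pos_of_pos ha 2)
    (Real.rpow_le_rpow ha.le hab (by norm_num))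

lemma bounded_sum_cpow (s : ℝ) (hs : s ≠ 0) :
    ∃ C : ℝ, ∀ N : ℕ, ‖∑ n ∈ Finset.Icc 1 N, (n:ℂ) ^ (Complex.I * s - 1)‖ ≤ C := by
  set c : ℂ := Complex.I * s with hc_def
  have hc : c ≠ 0 := by
    simp [hc_def, Complex.ext_iff, hs]
  have hcre : c.re = 0 := by simp [hc_def]
  set r : ℂ := c - 1 with hr_def
  have hrre : r.re = -1 := by simp [hr_def, hcre]
  have hr0 : r ≠ 0 := fun h => by simp [h] at hrre
  have hrne : r ≠ -1 := fun h => hc (by linear_combination h)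
  have hr1 : r - 1 ≠ -1 := fun h => hr0 (by linear_combination h)
  -- derivative of x ↦ (x:ℂ)^r
  have hderiv : ∀ y : ℝ, 0 < y →
      HasDerivAt (fun y : ℝ => (y:ℂ) ^ r) (r * (y:ℂ) ^ (r - 1)) y := by
    intro y hy
    have h := (hasDerivAt_ofReal_cpow_const' hy.ne' hr1).const_mul r
    simp only [sub_add_cancel] at h
    exact h.congr_of_eventuallyEq (Filter.Eventually.of_forall fun z => (mul_div_cancel₀ _ hr0).symm)
  -- norm of the derivative
  have hnormderiv : ∀ y : ℝ, 0 < y → ‖r * (y:ℂ) ^ (r - 1)‖ = ‖r‖ * y ^ (-2:ℝ) := by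
    intro y hy
    rw [norm_mul,
      Complex.norm_cpow_eq_rpow_re_of_pos hy]
    congr 1
    have : (r - 1).re = -2 := by rw [Complex.sub_re, hrre]; norm_num
    rw [this]
  -- value of the elementary integrals
  have hint : ∀ n : ℕ, 1 ≤ n → (∫ x : ℝ in (n:ℝ)..((n:ℝ)+1), (x:ℂ) ^ r)
      = ((((n+1:ℕ):ℝ)):ℂ) ^ c / c - (((n:ℝ)):ℂ) ^ c / c := by
    intro n hn
    have hn0 : (0:ℝ) < n := by exact_mod_cast hn
    have h0 : (0:ℝ) ∉ Set.uIcc (n:ℝ) ((n:ℝ)+1) := by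
      rw [Set.uIcc_of_le (by linarith)]
      intro h0
      exact absurd h0.1 (by linarith)
    rw [integral_cpow (Or.inr ⟨hrne, h0⟩)]
    have : r + 1 = c := by rw [hr_def]; ring
    rw [this]
    push_cast
    ring
  -- difference between term and integral
  have hdiff : ∀ n : ℕ, 1 ≤ n →
      ‖(n:ℂ) ^ r - ∫ x : ℝ in (n:ℝ)..((n:ℝ)+1), (x:ℂ) ^ r‖ ≤ ‖r‖ * (n:ℝ) ^ (-2:ℝ) := by
    intro n hn
    have hn0 : (0:ℝ) < n := by exact_mod_cast hn
    have h0 : (0:ℝ) ∉ Set.uIcc (n:ℝ) ((n:ℝ)+1) := by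
      rw [Set.uIcc_of_le (by linarith)]
      intro h0
      exact absurd h0.1 (by linarith)
    have hInt : IntervalIntegrable (fun x : ℝ => (x:ℂ) ^ r) volume (n:ℝ) ((n:ℝ)+1) :=
      intervalIntegrable_cpow (Or.inr h0)
    have hconst : (n:ℂ) ^ r = ∫ _x : ℝ in (n:ℝ)..((n:ℝ)+1), ((n:ℝ):ℂ) ^ r := by
      rw [intervalIntegral.integral_const]
      push_cast
      rw [add_sub_cancel_left, one_smul]
    rw [hconst, ← intervalIntegral.integral_sub intervalIntegrable_const hInt]
    have hbound : ∀ x ∈ Set.uIoc (n:ℝ) ((n:ℝ)+1),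
        ‖((n:ℝ):ℂ) ^ r - (x:ℂ) ^ r‖ ≤ ‖r‖ * (n:ℝ) ^ (-2:ℝ) := by
      intro x hx
      rw [Set.uIoc_of_le (by linarith)] at hx
      have hx1 : (n:ℝ) ≤ x := hx.1.le
      have hx2 : x ≤ (n:ℝ) + 1 := hx.2
      have := Convex.norm_image_sub_le_of_norm_hasDerivWithin_le
        (f := fun y : ℝ => (y:ℂ) ^ r) (f' := fun y : ℝ => r * (y:ℂ) ^ (r - 1))
        (s := Set.Icc (n:ℝ) ((n:ℝ)+1)) (C := ‖r‖ * (n:ℝ) ^ (-2:ℝ))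
        (fun y hy => (hderiv y (lt_of_lt_of_le hn0 hy.1)).hasDerivWithinAt)
        (fun y hy => by
          rw [hnormderiv y (lt_of_lt_of_le hn0 hy.1)]
          exact mul_le_mul_of_nonneg_left
            (rpow_neg_two_anti hn0 hy.1) (norm_nonneg r))
        (convex_Icc _ _) (Set.mem_Icc.2 ⟨le_refl _, by linarith⟩)
        (Set.mem_Icc.2 ⟨hx1, hx2⟩)
      calc ‖((n:ℝ):ℂ) ^ r - (x:ℂ) ^ r‖ = ‖(x:ℂ) ^ r - ((n:ℝ):ℂ) ^ r‖ := (norm_sub_rev _ _)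
        _ ≤ (‖r‖ * (n:ℝ) ^ (-2:ℝ)) * ‖x - (n:ℝ)‖ := this
        _ ≤ (‖r‖ * (n:ℝ) ^ (-2:ℝ)) * 1 := by
            refine mul_le_mul_of_nonneg_left ?_ (by positivity)
            rw [Real.norm_eq_abs, abs_of_nonneg (by linarith)]
            linarith
        _ = ‖r‖ * (n:ℝ) ^ (-2:ℝ) := mul_one _
    have := intervalIntegral.norm_integral_le_of_norm_le_const hbound
    rwa [add_sub_cancel_left, abs_one, mul_one] at this
  set F : ℕ → ℂ := fun i => ((i:ℝ):ℂ) ^ c / c with hF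
  have hFnorm : ∀ i : ℕ, 1 ≤ i → ‖F i‖ = 1 / ‖c‖ := by
    intro i hi
    have hi0 : (0:ℝ) < i := by exact_mod_cast hi
    rw [hF]
    simp only [norm_div]
    congr 1
    rw [Complex.norm_cpow_eq_rpow_re_of_pos hi0, hcre, Real.rpow_zero]
  set g : ℕ → ℂ := fun n => (n:ℂ) ^ r - ∫ x : ℝ in (n:ℝ)..((n:ℝ)+1), (x:ℂ) ^ r with hg
  have htel : ∀ N : ℕ, ∑ n ∈ Finset.Icc 1 N, (F (n+1) - F n) = F (N+1) - F 1 := by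
    intro N
    induction N with
    | zero => simp
    | succ N ih =>
      rw [Finset.sum_Icc_succ_top (Nat.one_le_iff_ne_zero.2 (Nat.succ_ne_zero N)), ih]
      ring
  have hT : Summable (fun n : ℕ => (n:ℝ) ^ (-2:ℝ)) :=
    Real.summable_nat_rpow.2 (by norm_num)
  set T : ℝ := ∑' n : ℕ, (n:ℝ) ^ (-2:ℝ) with hTdef
  refine ⟨‖r‖ * T + 2 / ‖c‖, fun N => ?_⟩
  have hsplit : ∑ n ∈ Finset.Icc 1 N, (n:ℂ) ^ r
      = (∑ n ∈ Finset.Icc 1 N, g n) + (F (N+1) - F 1) := by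
    rw [← htel N, ← Finset.sum_add_distrib]
    refine Finset.sum_congr rfl fun n hn => ?_
    have hn1 : 1 ≤ n := (Finset.mem_Icc.1 hn).1
    rw [hg]
    simp only
    rw [hint n hn1]
    simp only [hF]
    push_cast
    ring
  rw [hsplit]
  calc ‖(∑ n ∈ Finset.Icc 1 N, g n) + (F (N+1) - F 1)‖
      ≤ ‖∑ n ∈ Finset.Icc 1 N, g n‖ + ‖F (N+1) - F 1‖ := norm_add_le _ _
    _ ≤ (∑ n ∈ Finset.Icc 1 N, ‖r‖ * (n:ℝ) ^ (-2:ℝ)) + (‖F (N+1)‖ + ‖F 1‖) := by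
        gcongr
        · exact norm_sum_le_of_le _ fun n hn => hdiff n (Finset.mem_Icc.1 hn).1
        · exact norm_sub_le _ _
    _ ≤ ‖r‖ * T + 2 / ‖c‖ := by
        rw [hFnorm (N+1) (Nat.le_add_left 1 N), hFnorm 1 le_rfl]
        have h1 : ∑ n ∈ Finset.Icc 1 N, ‖r‖ * (n:ℝ) ^ (-2:ℝ)
            = ‖r‖ * ∑ n ∈ Finset.Icc 1 N, (n:ℝ) ^ (-2:ℝ) := by
          rw [Finset.mul_sum]
        rw [h1]
        have h2 : ∑ n ∈ Finset.Icc 1 N, (n:ℝ) ^ (-2:ℝ) ≤ T :=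
          Summable.sum_le_tsum _ (fun i _ => Real.rpow_nonneg (Nat.cast_nonneg i) _) hT
        have h3 : 1 / ‖c‖ + 1 / ‖c‖ = 2 / ‖c‖ := by ring
        rw [h3]
        have := mul_le_mul_of_nonneg_left h2 (norm_nonneg r)
        linarith


lemma inv_mul_exp_eq_cpow (s : ℝ) (n : ℕ) (hn : 1 ≤ n) :
    (n:ℂ)⁻¹ * Complex.exp (Complex.I * s * (Real.log n : ℂ))
      = (n:ℂ) ^ (Complex.I * s - 1) := by
  have hn0 : (0:ℝ) < n := by exact_mod_cast hn
  have hnC : (n:ℂ) ≠ 0 := Nat.cast_ne_zero.2 (by omega)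
  rw [Complex.cpow_def_of_ne_zero hnC]
  have hlog : Complex.log (n:ℂ) = (Real.log n : ℂ) := by
    rw [← Complex.ofReal_natCast, Complex.ofReal_log hn0.le]
  have hexp : Complex.exp ((Real.log n : ℝ) : ℂ) = (n:ℂ) := by
    rw [← hlog, Complex.exp_log hnC]
  rw [hlog, mul_sub, mul_one, Complex.exp_sub, hexp, div_eq_inv_mul,
    mul_comm (Complex.I * (s:ℂ)) ((Real.log n : ℝ) : ℂ)]

lemma tendsto_logAvg_exp (s : ℝ) (hs : s ≠ 0) :
    Tendsto (fun N => logAvg N fun n => Complex.exp (Complex.I * s * (Real.log n : ℂ)))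
      atTop (𝓝 0) := by
  obtain ⟨C, hC⟩ := bounded_sum_cpow s hs
  have hC0 : 0 ≤ C := le_trans (norm_nonneg _) (hC 0)
  have hlogtend : Tendsto (fun N : ℕ => (Real.log N)⁻¹ * C) atTop (𝓝 0) := by
    have := (Real.tendsto_log_atTop.comp tendsto_natCast_atTop_atTop).inv_tendsto_atTop
    simpa using this.mul_const C
  apply squeeze_zero_norm' (a := fun N : ℕ => (Real.log N)⁻¹ * C) _ hlogtend
  filter_upwards [eventually_ge_atTop 2] with N hN
  have hlogpos : 0 < Real.log N := Real.log_pos (by exact_mod_cast hN)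
  rw [logAvg]
  have hsum : ∑ n ∈ Finset.Icc 1 N, (n:ℂ)⁻¹ * Complex.exp (Complex.I * s * (Real.log n : ℂ))
      = ∑ n ∈ Finset.Icc 1 N, (n:ℂ) ^ (Complex.I * s - 1) :=
    Finset.sum_congr rfl fun n hn => inv_mul_exp_eq_cpow s n (Finset.mem_Icc.1 hn).1
  rw [hsum, norm_mul, norm_inv, Complex.norm_real, Real.norm_eq_abs, abs_of_pos hlogpos]
  exact mul_le_mul_of_nonneg_left (hC N) (by positivity)

lemma logAvg_congr (N : ℕ) {f g : ℕ → ℂ} (h : ∀ n, 1 ≤ n → f n = g n) :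
    logAvg N f = logAvg N g := by
  unfold logAvg
  congr 1
  exact Finset.sum_congr rfl fun n hn => by rw [h n (Finset.mem_Icc.1 hn).1]

lemma logAvg_add (N : ℕ) (f g : ℕ → ℂ) :
    logAvg N (fun n => f n + g n) = logAvg N f + logAvg N g := by
  unfold logAvg
  rw [← mul_add, ← Finset.sum_add_distrib]
  congr 1
  exact Finset.sum_congr rfl fun n _ => by ring

lemma tendsto_log_shift (h : ℕ) :
    Tendsto (fun n : ℕ => Real.log ((n:ℝ) + (h:ℝ)) - Real.log n) atTop (𝓝 0) := by
  have h1 : Tendsto (fun n : ℕ => 1 + (h:ℝ) / n) atTop (𝓝 1) := by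
    have h0 : Tendsto (fun n : ℕ => (h:ℝ) / n) atTop (𝓝 0) :=
      Tendsto.div_atTop tendsto_const_nhds (tendsto_natCast_atTop_atTop (R := ℝ))
    simpa using tendsto_const_nhds.add h0
  have h2 := ((Real.continuousAt_log one_ne_zero).tendsto).comp h1
  rw [Real.log_one] at h2
  refine h2.congr' ?_
  filter_upwards [eventually_ge_atTop 1] with n hn
  have hn0 : (0:ℝ) < n := by exact_mod_cast hn
  show Real.log (1 + (h:ℝ) / n) = _
  rw [show (1:ℝ) + (h:ℝ)/n = ((n:ℝ) + h) / n by field_simp,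
    Real.log_div (by positivity) hn0.ne']

/-- The logarithmic averages of products of archimedean phases `exp(i t k_j log(n+h_j))`
converge to `1` if `k₁ + ⋯ + k_m = 0` and to `0` otherwise; in particular
`E^log n^{it} = 0` for `t ≠ 0`. -/
theorem log_averages_of_archimedean_characters
    (t : ℝ) (ht : t ≠ 0) (m : ℕ) (h : Fin m → ℕ) (k : Fin m → ℤ) :
    Tendsto (fun N => logAvg N fun n =>
        ∏ j, Complex.exp (Complex.I * t * (k j : ℂ) * Real.log ((n : ℝ) + (h j : ℝ))))
      atTop (nhds (if (∑ j, k j) = 0 then 1 else 0)) ∧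
    Tendsto (fun N => logAvg N fun n => Complex.exp (Complex.I * t * Real.log (n : ℝ)))
      atTop (nhds 0) := by
  constructor
  · set u : ℤ := ∑ j, k j with hu
    set phase : ℕ → ℂ := fun n => Complex.exp (Complex.I * t * (u:ℂ) * (Real.log n : ℂ))
      with hphase
    set eps : ℕ → ℂ := fun n => Complex.exp (Complex.I * t *
      ∑ j, (k j : ℂ) * ((Real.log ((n:ℝ) + (h j:ℝ)) - Real.log n : ℝ) : ℂ)) with heps
    have heps1 : Tendsto eps atTop (𝓝 1) := by
      have hS : Tendsto (fun n : ℕ => ∑ j, (k j : ℂ) *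
          ((Real.log ((n:ℝ) + (h j:ℝ)) - Real.log n : ℝ) : ℂ)) atTop (𝓝 0) := by
        have h0 : (0:ℂ) = ∑ _j : Fin m, (0:ℂ) := by simp
        rw [h0]
        refine tendsto_finset_sum _ fun j _ => ?_
        have h1 := (Complex.continuous_ofReal.tendsto 0).comp (tendsto_log_shift (h j))
        have h2 := h1.const_mul ((k j : ℂ))
        simpa using h2
      have h3 := hS.const_mul (Complex.I * t)
      rw [mul_zero] at h3
      have h4 := (Complex.continuous_exp.tendsto 0).comp h3
      rw [Complex.exp_zero] at h4
      exact h4.congr fun n => by simp [heps, mul_assoc]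
    have hsplit : ∀ n : ℕ, 1 ≤ n →
        (∏ j, Complex.exp (Complex.I * t * (k j : ℂ) * Real.log ((n : ℝ) + (h j : ℝ))))
          = phase n + phase n * (eps n - 1) := by
      intro n hn
      have heq : phase n + phase n * (eps n - 1) = phase n * eps n := by ring
      rw [heq, hphase, heps]
      simp only
      rw [← Complex.exp_sum, ← Complex.exp_add]
      congr 1
      have hterm : ∀ j : Fin m,
          (Complex.I * t * (k j : ℂ) * ((Real.log ((n : ℝ) + (h j : ℝ)) : ℝ) : ℂ))
          = Complex.I * t * (k j : ℂ) * ((Real.log n : ℝ) : ℂ)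
            + Complex.I * t *
              ((k j : ℂ) * ((Real.log ((n:ℝ) + (h j:ℝ)) - Real.log n : ℝ) : ℂ)) := by
        intro j
        push_cast
        ring
      rw [Finset.sum_congr rfl fun j _ => hterm j, Finset.sum_add_distrib]
      congr 1
      · calc ∑ j, Complex.I * t * (k j : ℂ) * ((Real.log n : ℝ) : ℂ)
            = (Complex.I * t * ((Real.log n : ℝ) : ℂ)) * ∑ j, (k j : ℂ) := by
              rw [Finset.mul_sum]; exact Finset.sum_congr rfl fun j _ => by ring
          _ = Complex.I * t * (u:ℂ) * ((Real.log n : ℝ) : ℂ) := by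
              rw [hu]; push_cast; ring
      · rw [Finset.mul_sum]
    have T1 : Tendsto (fun N => logAvg N phase) atTop (𝓝 (if u = 0 then 1 else 0)) := by
      by_cases hu0 : u = 0
      · rw [if_pos hu0]
        have hp : phase = fun _ => 1 := by funext n; simp [hphase, hu0]
        rw [hp]
        exact tendsto_logAvg_of_tendsto tendsto_const_nhds
      · rw [if_neg hu0]
        have hs : t * (u:ℝ) ≠ 0 := mul_ne_zero ht (Int.cast_ne_zero.2 hu0)
        refine (tendsto_logAvg_exp (t * (u:ℝ)) hs).congr fun N => ?_
        refine logAvg_congr N fun n _ => ?_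
        congr 1
        push_cast
        ring
    have T2 : Tendsto (fun N => logAvg N (fun n => phase n * (eps n - 1))) atTop (𝓝 0) := by
      refine tendsto_logAvg_of_tendsto ?_
      have hnorm : ∀ n : ℕ, ‖phase n * (eps n - 1)‖ = ‖eps n - 1‖ := by
        intro n
        rw [norm_mul]
        have hp1 : ‖phase n‖ = 1 := by
          rw [hphase]
          simp only
          rw [show Complex.I * t * (u:ℂ) * ((Real.log n : ℝ) : ℂ)
            = ((t * u * Real.log n : ℝ) : ℂ) * Complex.I by push_cast; ring]
          rw [Complex.norm_exp_ofReal_mul_I]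
        rw [hp1, one_mul]
      apply squeeze_zero_norm (fun n => le_of_eq (hnorm n))
      rw [← tendsto_zero_iff_norm_tendsto_zero]
      exact tendsto_sub_nhds_zero_iff.2 heps1
    have hfin := T1.add T2
    rw [add_zero] at hfin
    refine hfin.congr fun N => ?_
    rw [← logAvg_add]
    exact (logAvg_congr N fun n hn => hsplit n hn).symm
  · exact tendsto_logAvg_exp t ht
end
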